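/- For every bounded linear operator A on a complex Hilbert space and every unit vector x, and for v ∈ [0,1], |⟨Ax,x⟩| ≤ sqrt( ⟨|A|^{2(1-v)}x, x⟩ ⟨|A*|^{2v}x, x⟩ ). -/

import Mathlib

variable {H : Type*} [NormedAddCommGroup H] [InnerProductSpace ℂ H] [CompleteSpace H]

/-- The numerical radius of a bounded linear operator. -/
noncomputable def numRadius (A : H →L[ℂ] H) : ℝ :=
  ⨆ x : {x : H // ‖x‖ = 1}, ‖(inner ℂ (A x) (x : H) : ℂ)‖

/-- The absolute value |A| = (A*A)^(1/2). -/
noncomputable def absOp (A : H →L[ℂ] H) : H →L[ℂ] H :=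
  CFC.sqrt (ContinuousLinearMap.adjoint A * A)

/-- Real powers of an operator via continuous functional calculus. -/
noncomputable def opRpow (T : H →L[ℂ] H) (r : ℝ) : H →L[ℂ] H :=
  cfc (fun t : ℝ => t ^ r) T

open ContinuousLinearMap

set_option maxHeartbeats 1000000
set_option synthInstance.maxHeartbeats 400000

lemma absOp_nonneg (A : H →L[ℂ] H) : 0 ≤ absOp A := CFC.sqrt_nonneg _

lemma absOp_selfAdjoint (A : H →L[ℂ] H) : IsSelfAdjoint (absOp A) :=
  (absOp_nonneg A).isSelfAdjoint

lemma absOp_mul_self (A : H →L[ℂ] H) : absOp A * absOp A = adjoint A * A :=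
  CFC.sqrt_mul_sqrt_self (adjoint A * A) (star_mul_self_nonneg A)

lemma absOp_adjoint_eq (A : H →L[ℂ] H) : adjoint (absOp A) = absOp A :=
  (absOp_selfAdjoint A)

lemma norm_absOp_apply (A : H →L[ℂ] H) (z : H) : ‖absOp A z‖ = ‖A z‖ := by
  have h1 : ‖absOp A z‖^2 = ‖A z‖^2 := by
    rw [apply_norm_sq_eq_inner_adjoint_left, apply_norm_sq_eq_inner_adjoint_left]
    rw [← mul_def, ← mul_def, absOp_adjoint_eq, absOp_mul_self]
  nlinarith [norm_nonneg (absOp A z), norm_nonneg (A z)]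


lemma continuous_rpow_const_of_pos {a : ℝ} (ha : 0 < a) : Continuous fun t : ℝ => t ^ a :=
  continuous_iff_continuousAt.mpr fun t => Real.continuousAt_rpow_const t a (Or.inr ha.le)

namespace Kato

variable (A : H →L[ℂ] H)

noncomputable abbrev Bl : H →ₗ[ℂ] H := ((absOp A) : H →ₗ[ℂ] H)

noncomputable abbrev KK : Submodule ℂ H := LinearMap.range (Bl A)

noncomputable def SS : Submodule ℂ H := (KK A).topologicalClosure

instance : CompleteSpace (SS A) :=
  (Submodule.isClosed_topologicalClosure _).completeSpace_coe

lemma absOp_mem_KK (z : H) : absOp A z ∈ KK A := ⟨z, rfl⟩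

lemma ker_le : LinearMap.ker (Bl A) ≤ LinearMap.ker (A : H →ₗ[ℂ] H) := by
  intro z hz
  simp only [LinearMap.mem_ker, ContinuousLinearMap.coe_coe, Bl] at *
  have h : ‖A z‖ = 0 := by rw [← norm_absOp_apply, hz, norm_zero]
  simpa using h

noncomputable def Vlin : KK A →ₗ[ℂ] H :=
  ((LinearMap.ker (Bl A)).liftQ (A : H →ₗ[ℂ] H) (ker_le A)) ∘ₗ
    (((Bl A).quotKerEquivRange.symm : KK A ≃ₗ[ℂ] _) : KK A →ₗ[ℂ] _)

lemma Vlin_apply' (z : H) (h : Bl A z ∈ KK A) : Vlin A ⟨Bl A z, h⟩ = A z := by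
  have h2 := LinearMap.quotKerEquivRange_symm_apply_image (Bl A) z h
  simp only [Vlin, LinearMap.coe_comp, Function.comp_apply, LinearEquiv.coe_coe]
  rw [h2]
  simp [Submodule.liftQ_apply]

lemma Vlin_apply (z : H) (h : absOp A z ∈ KK A) : Vlin A ⟨absOp A z, h⟩ = A z :=
  Vlin_apply' A z h

lemma norm_Vlin_apply (y : KK A) : ‖Vlin A y‖ = ‖(y : H)‖ := by
  obtain ⟨y, hy⟩ := y
  obtain ⟨z, rfl⟩ := hy
  exact (congrArg norm (Vlin_apply' A z ⟨z, rfl⟩)).trans (norm_absOp_apply A z).symm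

noncomputable def V0 : KK A →L[ℂ] H :=
  (Vlin A).mkContinuous 1 (by intro y; rw [norm_Vlin_apply]; simp)

lemma V0_apply (y : KK A) : V0 A y = Vlin A y := rfl

noncomputable def incl : KK A →L[ℂ] SS A :=
  (Submodule.inclusion (Submodule.le_topologicalClosure _)).mkContinuous 1
    (by intro y; simp [Submodule.inclusion]; rfl)

lemma incl_apply (y : KK A) : ((incl A y : SS A) : H) = (y : H) := rfl

lemma isometry_incl : Isometry (incl A) :=
  AddMonoidHomClass.isometry_of_norm (incl A) (fun y => rfl)

lemma incl_dense : DenseRange (incl A) := by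
  intro y
  rw [closure_subtype]
  have himg : (Subtype.val '' Set.range (incl A)) = (KK A : Set H) := by
    ext u
    constructor
    · rintro ⟨s, ⟨k, rfl⟩, rfl⟩
      exact k.2
    · intro hu
      exact ⟨incl A ⟨u, hu⟩, ⟨⟨u, hu⟩, rfl⟩, rfl⟩
  rw [himg]
  have h2 : (y : H) ∈ (KK A).topologicalClosure := y.2
  rwa [← Submodule.topologicalClosure_coe]


noncomputable def Vt : SS A →L[ℂ] H :=
  (V0 A).extend (incl A)

lemma Vt_incl (y : KK A) : Vt A (incl A y) = V0 A y :=
  ContinuousLinearMap.extend_eq _ (incl_dense A) (isometry_incl A).isUniformInducing _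

lemma norm_Vt (s : SS A) : ‖Vt A s‖ = ‖s‖ := by
  refine (incl_dense A).induction_on s ?_ ?_
  · exact isClosed_eq (continuous_norm.comp (Vt A).continuous) continuous_norm
  · intro y
    rw [Vt_incl, (isometry_incl A).norm_map_of_map_zero (map_zero _)]
    rw [V0_apply, norm_Vlin_apply]
    rfl

noncomputable def VtIso : SS A →ₗᵢ[ℂ] H := ⟨(Vt A).toLinearMap, fun s => norm_Vt A s⟩

lemma inner_Vt (s t : SS A) : (inner ℂ (Vt A s) (Vt A t) : ℂ) = inner ℂ (s : H) (t : H) := by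
  have h := (VtIso A).inner_map_map s t
  rw [Submodule.coe_inner] at h
  exact h

noncomputable def U : H →L[ℂ] H := (Vt A).comp (((SS A).orthogonalProjectionOnto) : H →L[ℂ] SS A)

lemma U_apply (y : H) : U A y = Vt A ((SS A).orthogonalProjectionOnto y) := rfl

lemma U_apply_mem (y : H) (h : y ∈ SS A) : U A y = Vt A ⟨y, h⟩ := by
  rw [U_apply, Submodule.orthogonalProjectionOnto_mem_subspace_eq_self ⟨y, h⟩]

lemma U_absOp_apply (z : H) : U A (absOp A z) = A z := by
  have hk : absOp A z ∈ KK A := absOp_mem_KK A z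
  have hs : absOp A z ∈ SS A := Submodule.le_topologicalClosure _ hk
  rw [U_apply_mem A _ hs]
  have : (⟨absOp A z, hs⟩ : SS A) = incl A ⟨absOp A z, hk⟩ := rfl
  rw [this, Vt_incl, V0_apply, Vlin_apply]

lemma U_mul_absOp : U A * absOp A = A := by
  ext z
  simp [ContinuousLinearMap.mul_apply, U_absOp_apply]

lemma norm_U_apply_le (y : H) : ‖U A y‖ ≤ ‖y‖ := by
  rw [U_apply, norm_Vt]
  calc ‖((SS A).orthogonalProjectionOnto y : SS A)‖ ≤ ‖((SS A).orthogonalProjectionOnto : H →L[ℂ] SS A)‖ * ‖y‖ :=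
        ((SS A).orthogonalProjectionOnto).le_opNorm y
    _ ≤ 1 * ‖y‖ := mul_le_mul_of_nonneg_right (Submodule.orthogonalProjectionOnto_norm_le _) (norm_nonneg y)
    _ = ‖y‖ := one_mul _

lemma norm_U_le : ‖U A‖ ≤ 1 :=
  ContinuousLinearMap.opNorm_le_bound _ zero_le_one (by simpa using norm_U_apply_le A)

lemma norm_adjU_le : ‖adjoint (U A)‖ ≤ 1 := by
  rw [show adjoint (U A) = (ContinuousLinearMap.adjoint : (H →L[ℂ] H) ≃ₗᵢ⋆[ℂ] (H →L[ℂ] H)) (U A) from rfl,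
    LinearIsometryEquiv.norm_map]
  exact norm_U_le A

lemma adjU_U : adjoint (U A) * U A = (SS A).subtypeL.comp (((SS A).orthogonalProjectionOnto) : H →L[ℂ] SS A) := by
  ext z
  apply ext_inner_left ℂ
  intro w
  rw [ContinuousLinearMap.mul_apply, adjoint_inner_right]
  show (inner ℂ (U A w) (U A z) : ℂ) = inner ℂ w (((SS A).orthogonalProjectionOnto z : H))
  rw [U_apply, U_apply, inner_Vt]
  rw [← Submodule.starProjection_apply, ← Submodule.starProjection_apply,
    Submodule.inner_starProjection_left_eq_right]
  rw [Submodule.starProjection_eq_self_iff.mpr (Submodule.starProjection_apply_mem _ _)]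

lemma adjU_U_absOp : (adjoint (U A) * U A) * absOp A = absOp A := by
  rw [adjU_U]
  ext z
  show (((SS A).orthogonalProjectionOnto (absOp A z) : SS A) : H) = absOp A z
  have hs : absOp A z ∈ SS A := Submodule.le_topologicalClosure _ (absOp_mem_KK A z)
  exact Submodule.starProjection_eq_self_iff.mpr hs


lemma U_absOp_adjU : U A * absOp A * adjoint (U A) = absOp (adjoint A) := by
  have hBpos : (absOp A).IsPositive := (nonneg_iff_isPositive _).mp (absOp_nonneg A)
  have hXpos : (U A * absOp A * adjoint (U A)).IsPositive := by
    have := hBpos.conj_adjoint (U A)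
    simpa [ContinuousLinearMap.mul_def, ContinuousLinearMap.comp_assoc] using this
  have hX : 0 ≤ U A * absOp A * adjoint (U A) := (nonneg_iff_isPositive _).mpr hXpos
  have h2 : adjoint (U A) * (U A * (absOp A * adjoint (U A)))
      = absOp A * adjoint (U A) := by
    have := congrArg (· * adjoint (U A)) (adjU_U_absOp A)
    simpa [mul_assoc] using this
  have hsq : (U A * absOp A * adjoint (U A)) * (U A * absOp A * adjoint (U A))
      = A * adjoint A := by
    have e1 : (U A * absOp A * adjoint (U A)) * (U A * absOp A * adjoint (U A))
        = U A * (absOp A * (adjoint (U A) * (U A * (absOp A * adjoint (U A))))) := by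
      simp only [mul_assoc]
    rw [e1, h2]
    have e2 : A * adjoint A = U A * (absOp A * (absOp A * adjoint (U A))) := by
      conv_lhs => rw [← U_mul_absOp A]
      have : adjoint (U A * absOp A) = absOp A * adjoint (U A) := by
        rw [← star_eq_adjoint, ← star_eq_adjoint, star_mul, star_eq_adjoint, star_eq_adjoint,
          absOp_adjoint_eq]
      rw [this]
      simp only [mul_assoc]
    rw [e2]
  have : absOp (adjoint A) = CFC.sqrt (A * adjoint A) := by
    rw [absOp, adjoint_adjoint]
  rw [this, ← hsq, CFC.sqrt_mul_self _ hX]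

lemma adjU_U_absOp_pow (n : ℕ) :
    (adjoint (U A) * U A) * (absOp A)^(n+1) = (absOp A)^(n+1) := by
  induction n with
  | zero => simpa using adjU_U_absOp A
  | succ n ih =>
    have : (absOp A)^(n+2) = (absOp A)^(n+1) * absOp A := by rw [← pow_succ]
    rw [this, ← mul_assoc, ih]

lemma conj_pow (n : ℕ) :
    U A * (absOp A)^(n+1) * adjoint (U A) = (absOp (adjoint A))^(n+1) := by
  induction n with
  | zero => simpa using U_absOp_adjU A
  | succ n ih =>
    have e1 : (absOp A)^(n+2) = (absOp A)^(n+1) * ((adjoint (U A) * U A) * absOp A) := by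
      rw [adjU_U_absOp A, ← pow_succ]
    have e2 : U A * ((absOp A)^(n+1) * ((adjoint (U A) * U A) * absOp A)) * adjoint (U A)
        = (U A * (absOp A)^(n+1) * adjoint (U A)) * (U A * absOp A * adjoint (U A)) := by
      simp only [mul_assoc]
    rw [e1, e2, ih, U_absOp_adjU, ← pow_succ]

lemma conj_aeval (q : Polynomial ℝ) :
    U A * (absOp A * (Polynomial.aeval (absOp A) q)) * adjoint (U A)
      = absOp (adjoint A) * (Polynomial.aeval (absOp (adjoint A)) q) := by
  induction q using Polynomial.induction_on' with
  | add p q hp hq =>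
    simp only [map_add, mul_add, add_mul] at *
    rw [hp, hq]
  | monomial n a =>
    simp only [Polynomial.aeval_monomial]
    have e1 : absOp A * ((algebraMap ℝ (H →L[ℂ] H)) a * (absOp A)^n) = a • (absOp A)^(n+1) := by
      rw [Algebra.algebraMap_eq_smul_one, smul_mul_assoc, one_mul, mul_smul_comm, ← pow_succ']
    have e2 : absOp (adjoint A) * ((algebraMap ℝ (H →L[ℂ] H)) a * (absOp (adjoint A))^n)
        = a • (absOp (adjoint A))^(n+1) := by
      rw [Algebra.algebraMap_eq_smul_one, smul_mul_assoc, one_mul, mul_smul_comm, ← pow_succ']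
    rw [e1, e2, mul_smul_comm, smul_mul_assoc, conj_pow]


lemma spectrum_subset_Icc [Nontrivial H] (T : H →L[ℂ] H) (hT : 0 ≤ T) {M : ℝ} (hM : ‖T‖ ≤ M) :
    spectrum ℝ T ⊆ Set.Icc 0 M := by
  intro t ht
  refine ⟨spectrum_nonneg_of_nonneg hT ht, ?_⟩
  have h1 : ‖t‖ ≤ ‖T‖ := spectrum.norm_le_norm_of_mem ht
  have h2 : t ≤ |t| := le_abs_self t
  rw [Real.norm_eq_abs] at h1
  linarith

lemma conj_cfc [Nontrivial H] (f : ℝ → ℝ) (hf : Continuous f) (hf0 : f 0 = 0) :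
    U A * cfc f (absOp A) * adjoint (U A) = cfc f (absOp (adjoint A)) := by
  set B := absOp A with hBdef
  set C := absOp (adjoint A) with hCdef
  have hB : IsSelfAdjoint B := absOp_selfAdjoint A
  have hC : IsSelfAdjoint C := absOp_selfAdjoint (adjoint A)
  set M : ℝ := max ‖B‖ ‖C‖ with hMdef
  have hσB : spectrum ℝ B ⊆ Set.Icc 0 M :=
    spectrum_subset_Icc B (absOp_nonneg A) (le_max_left _ _)
  have hσC : spectrum ℝ C ⊆ Set.Icc 0 M :=
    spectrum_subset_Icc C (absOp_nonneg (adjoint A)) (le_max_right _ _)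
  have h0M : (0:ℝ) ∈ Set.Icc 0 M := ⟨le_refl 0, le_trans (norm_nonneg B) (le_max_left _ _)⟩
  have hbound : ∀ ε : ℝ, 0 < ε →
      ‖U A * cfc f B * adjoint (U A) - cfc f C‖ ≤ 4*ε := by
    intro ε hε
    obtain ⟨p, hp⟩ := exists_polynomial_near_of_continuousOn 0 M f hf.continuousOn ε hε
    set g : ℝ → ℝ := fun t => p.eval t - p.eval 0 with hgdef
    have hgcont : Continuous g := p.continuous.sub continuous_const
    have happrox : ∀ t ∈ Set.Icc 0 M, |f t - g t| ≤ 2*ε := by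
      intro t ht
      have h1 := hp t ht
      have h2 := hp 0 h0M
      rw [hf0, sub_zero] at h2
      have : f t - g t = -((p.eval t - f t)) + p.eval 0 := by simp [hgdef]; ring
      rw [this]
      calc |(-(p.eval t - f t)) + p.eval 0| ≤ |(-(p.eval t - f t))| + |p.eval 0| := abs_add_le _ _
        _ ≤ ε + ε := by rw [abs_neg]; exact add_le_add h1.le h2.le
        _ = 2*ε := by ring
    have hgB : ‖cfc f B - cfc g B‖ ≤ 2*ε := by
      rw [← cfc_sub f g B (hf.continuousOn) (hgcont.continuousOn)]
      refine norm_cfc_le (by positivity) ?_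
      intro t ht
      rw [Real.norm_eq_abs]
      exact happrox t (hσB ht)
    have hgC : ‖cfc g C - cfc f C‖ ≤ 2*ε := by
      rw [← cfc_sub g f C (hgcont.continuousOn) (hf.continuousOn)]
      refine norm_cfc_le (by positivity) ?_
      intro t ht
      rw [Real.norm_eq_abs, abs_sub_comm]
      exact happrox t (hσC ht)
    have hkey : U A * cfc g B * adjoint (U A) = cfc g C := by
      set q : Polynomial ℝ := p - Polynomial.C (p.eval 0) with hqdef
      have hgq : g = fun t => q.eval t := by
        funext t; simp [hgdef, hqdef]
      have hq0 : q.coeff 0 = 0 := by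
        simp [hqdef, Polynomial.coeff_sub, ← Polynomial.coeff_zero_eq_eval_zero]
      have hXq : Polynomial.X * q.divX = q := by
        have h := Polynomial.X_mul_divX_add q
        rwa [hq0, map_zero, add_zero] at h
      have haev : ∀ (T : H →L[ℂ] H), Polynomial.aeval T q = T * Polynomial.aeval T q.divX := by
        intro T
        conv_lhs => rw [← hXq]
        rw [map_mul, Polynomial.aeval_X]
      have hcfcB : cfc g B = B * Polynomial.aeval B q.divX := by
        rw [hgq, cfc_polynomial q B hB, haev]
      have hcfcC : cfc g C = C * Polynomial.aeval C q.divX := by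
        rw [hgq, cfc_polynomial q C hC, haev]
      rw [hcfcB, hcfcC, ← mul_assoc, mul_assoc (U A) B _, conj_aeval]
    have hUn : ‖U A‖ ≤ 1 := norm_U_le A
    have hUan : ‖adjoint (U A)‖ ≤ 1 := norm_adjU_le A
    have hsplit : U A * cfc f B * adjoint (U A) - cfc f C
        = U A * (cfc f B - cfc g B) * adjoint (U A) + (cfc g C - cfc f C) := by
      rw [mul_sub, sub_mul, hkey]
      abel
    rw [hsplit]
    have hn1 : ‖U A * (cfc f B - cfc g B) * adjoint (U A)‖ ≤ 2*ε := by
      calc ‖U A * (cfc f B - cfc g B) * adjoint (U A)‖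
          ≤ ‖U A * (cfc f B - cfc g B)‖ * ‖adjoint (U A)‖ := norm_mul_le _ _
        _ ≤ ‖U A‖ * ‖cfc f B - cfc g B‖ * ‖adjoint (U A)‖ := by
            have := norm_mul_le (U A) (cfc f B - cfc g B)
            have h3 : (0:ℝ) ≤ ‖adjoint (U A)‖ := norm_nonneg _
            nlinarith
        _ ≤ 1 * (2*ε) * 1 := by
            have h4 := norm_nonneg (cfc f B - cfc g B)
            have h5 := norm_nonneg (U A)
            have h6 := norm_nonneg (adjoint (U A))
            nlinarith [hgB, hUn, hUan, mul_le_mul hUn hgB h4 zero_le_one]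
        _ = 2*ε := by ring
    calc ‖U A * (cfc f B - cfc g B) * adjoint (U A) + (cfc g C - cfc f C)‖
        ≤ ‖U A * (cfc f B - cfc g B) * adjoint (U A)‖ + ‖cfc g C - cfc f C‖ := norm_add_le _ _
      _ ≤ 2*ε + 2*ε := add_le_add hn1 hgC
      _ = 4*ε := by ring
  have hz : ‖U A * cfc f B * adjoint (U A) - cfc f C‖ ≤ 0 := by
    by_contra hcon
    push_neg at hcon
    have := hbound (‖U A * cfc f B * adjoint (U A) - cfc f C‖/8) (by positivity)
    linarith
  have := norm_le_zero_iff.mp hz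
  exact sub_eq_zero.mp this


lemma opRpow_selfAdjoint (T : H →L[ℂ] H) (r : ℝ) : IsSelfAdjoint (opRpow T r) :=
  cfc_predicate _ _

lemma opRpow_factor (T : H →L[ℂ] H) (hT : 0 ≤ T) {a b : ℝ} (ha : 0 < a) (hb : 0 < b) :
    opRpow T a * opRpow T b = opRpow T (a+b) := by
  unfold opRpow
  rw [← cfc_mul _ _ T (continuous_rpow_const_of_pos ha).continuousOn
      (continuous_rpow_const_of_pos hb).continuousOn]
  apply cfc_congr
  intro t ht
  have ht0 : 0 ≤ t := spectrum_nonneg_of_nonneg hT ht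
  show t ^ a * t ^ b = t ^ (a + b)
  rcases eq_or_lt_of_le ht0 with rfl|h
  · rw [Real.zero_rpow (by positivity : a + b ≠ 0), Real.zero_rpow ha.ne', zero_mul]
  · rw [Real.rpow_add h]

lemma opRpow_one_eq (T : H →L[ℂ] H) (hT : 0 ≤ T) : opRpow T 1 = T := by
  unfold opRpow
  have h : (spectrum ℝ T).EqOn (fun t => t ^ (1:ℝ)) id := fun t _ => Real.rpow_one t
  rw [cfc_congr h, cfc_id ℝ T hT.isSelfAdjoint]

lemma inner_mul_self_apply (P : H →L[ℂ] H) (hP : IsSelfAdjoint P) (z : H) :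
    (inner ℂ ((P * P) z) z : ℂ).re = ‖P z‖^2 := by
  rw [ContinuousLinearMap.mul_apply]
  have h1 := adjoint_inner_left P z (P z)
  rw [show adjoint P = P from hP] at h1
  rw [h1, inner_self_eq_norm_sq_to_K]
  simp [← Complex.ofReal_pow]

lemma re_inner_opRpow (T : H →L[ℂ] H) (hT : 0 ≤ T) {s : ℝ} (hs : 0 < s) (z : H) :
    (inner ℂ (opRpow T (2*s) z) z : ℂ).re = ‖opRpow T s z‖^2 := by
  have h2 : opRpow T (2*s) = opRpow T s * opRpow T s := by
    rw [opRpow_factor T hT hs hs, two_mul]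
  rw [h2]
  exact inner_mul_self_apply _ (opRpow_selfAdjoint T s) z

end Kato


namespace Kato

lemma opRpow_zero_exp (T : H →L[ℂ] H) (hT : 0 ≤ T) : opRpow T 0 = 1 := by
  unfold opRpow
  have h : (fun t : ℝ => t ^ (0:ℝ)) = fun _ : ℝ => (1:ℝ) := funext fun t => Real.rpow_zero t
  rw [h, cfc_const_one ℝ T hT.isSelfAdjoint]

lemma opRpow_two_exp (T : H →L[ℂ] H) (hT : 0 ≤ T) : opRpow T 2 = T * T := by
  unfold opRpow
  have h : (fun t : ℝ => t ^ (2:ℝ)) = fun t : ℝ => t ^ (2:ℕ) := by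
    funext t
    rw [show ((2:ℝ)) = ((2:ℕ):ℝ) by norm_num, Real.rpow_natCast]
  rw [h, cfc_pow_id T 2 hT.isSelfAdjoint, pow_two]

lemma re_inner_one (x : H) (hx : ‖x‖ = 1) : (inner ℂ ((1 : H →L[ℂ] H) x) x : ℂ).re = 1 := by
  have : ((1 : H →L[ℂ] H) x) = x := rfl
  rw [this, inner_self_eq_norm_sq_to_K, hx]
  norm_num

end Kato

open Kato in
theorem stmt19 (A : H →L[ℂ] H) (x : H) (hx : ‖x‖ = 1) (v : ℝ) (hv : v ∈ Set.Icc (0:ℝ) 1) :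
    ‖(inner ℂ (A x) x : ℂ)‖ ≤ Real.sqrt
      ((inner ℂ (opRpow (absOp A) (2*(1-v)) x) x : ℂ).re *
       (inner ℂ (opRpow (absOp (ContinuousLinearMap.adjoint A)) (2*v) x) x : ℂ).re) := by
  rcases subsingleton_or_nontrivial H with hsub | hnt
  · exfalso
    rw [Subsingleton.elim x 0] at hx
    simp at hx
  obtain ⟨hv0, hv1⟩ := hv
  have hBnn : 0 ≤ absOp A := absOp_nonneg A
  have hCnn : 0 ≤ absOp (adjoint A) := absOp_nonneg (adjoint A)
  rcases eq_or_lt_of_le hv0 with rfl|hv0'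
  · -- v = 0
    have e0 : opRpow (absOp (adjoint A)) (2*(0:ℝ)) = 1 := by
      rw [mul_zero, opRpow_zero_exp _ hCnn]
    have e1 : opRpow (absOp A) (2*(1-(0:ℝ))) = absOp A * absOp A := by
      rw [show (2*(1-(0:ℝ))) = 2 by norm_num, opRpow_two_exp _ hBnn]
    rw [e0, e1, re_inner_one x hx, inner_mul_self_apply _ (absOp_selfAdjoint A) x,
      norm_absOp_apply, mul_one, Real.sqrt_sq (norm_nonneg _)]
    calc ‖(inner ℂ (A x) x : ℂ)‖ ≤ ‖A x‖ * ‖x‖ := norm_inner_le_norm _ _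
      _ = ‖A x‖ := by rw [hx, mul_one]
  rcases eq_or_lt_of_le hv1 with rfl|hv1'
  · -- v = 1
    have e0 : opRpow (absOp A) (2*(1-(1:ℝ))) = 1 := by
      rw [show (2*(1-(1:ℝ))) = 0 by norm_num, opRpow_zero_exp _ hBnn]
    have e1 : opRpow (absOp (adjoint A)) (2*(1:ℝ)) = absOp (adjoint A) * absOp (adjoint A) := by
      rw [show (2*(1:ℝ)) = 2 by norm_num, opRpow_two_exp _ hCnn]
    rw [e0, e1, re_inner_one x hx, inner_mul_self_apply _ (absOp_selfAdjoint (adjoint A)) x,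
      norm_absOp_apply, one_mul, Real.sqrt_sq (norm_nonneg _)]
    have hsymm : ‖(inner ℂ (A x) x : ℂ)‖ = ‖(inner ℂ ((adjoint A) x) x : ℂ)‖ := by
      rw [norm_inner_symm ((adjoint A) x) x, adjoint_inner_right]
    rw [hsymm]
    calc ‖(inner ℂ ((adjoint A) x) x : ℂ)‖ ≤ ‖(adjoint A) x‖ * ‖x‖ := norm_inner_le_norm _ _
      _ = ‖(adjoint A) x‖ := by rw [hx, mul_one]
  -- main case 0 < v < 1
  have hsv : 0 < 1 - v := by linarith
  have h2v : 0 < 2*v := by linarith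
  set B := absOp A with hB
  set C := absOp (adjoint A) with hC
  set Q := opRpow B v with hQ
  set R := opRpow B (1-v) with hR
  set u := adjoint (U A) x with hu
  have hterm1 : (inner ℂ (opRpow B (2*(1-v)) x) x : ℂ).re = ‖R x‖^2 :=
    re_inner_opRpow B hBnn hsv x
  have hconj : U A * opRpow B (2*v) * adjoint (U A) = opRpow C (2*v) := by
    have hcont : Continuous fun t : ℝ => t ^ (2*v) := continuous_rpow_const_of_pos h2v
    have h0 : (fun t : ℝ => t ^ (2*v)) 0 = 0 := Real.zero_rpow h2v.ne'
    exact conj_cfc A _ hcont h0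
  have hQQ : opRpow B (2*v) = Q * Q := by
    rw [hQ, opRpow_factor B hBnn hv0' hv0', two_mul]
  have hterm2 : (inner ℂ (opRpow C (2*v) x) x : ℂ).re = ‖Q u‖^2 := by
    rw [← hconj]
    have e : (U A * opRpow B (2*v) * adjoint (U A)) x = U A ((opRpow B (2*v)) u) := rfl
    rw [e]
    have e2 : (inner ℂ (U A ((opRpow B (2*v)) u)) x : ℂ).re
        = (inner ℂ x (U A ((opRpow B (2*v)) u)) : ℂ).re := by
      rw [← inner_conj_symm]
      exact (Complex.conj_re _)
    rw [e2, ← adjoint_inner_left (U A), ← hu, hQQ, ContinuousLinearMap.mul_apply]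
    have e3 := adjoint_inner_left Q (Q u) u
    rw [show adjoint Q = Q from opRpow_selfAdjoint B v] at e3
    rw [← e3, inner_self_eq_norm_sq_to_K]
    simp [← Complex.ofReal_pow]
  have hdec : ‖(inner ℂ (A x) x : ℂ)‖ ≤ ‖Q u‖ * ‖R x‖ := by
    have hAx : A x = U A (B x) := (U_absOp_apply A x).symm
    have hBsplit : B = Q * R := by
      rw [hQ, hR, opRpow_factor B hBnn hv0' hsv, show v + (1-v) = 1 by ring,
        opRpow_one_eq B hBnn]
    have hchain : (inner ℂ x (A x) : ℂ) = inner ℂ (Q u) (R x) := by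
      rw [hAx, ← adjoint_inner_left (U A), ← hu, hBsplit, ContinuousLinearMap.mul_apply]
      have e3 := adjoint_inner_left Q (R x) u
      rw [show adjoint Q = Q from opRpow_selfAdjoint B v] at e3
      rw [← e3]
    calc ‖(inner ℂ (A x) x : ℂ)‖ = ‖(inner ℂ x (A x) : ℂ)‖ := norm_inner_symm _ _
      _ = ‖(inner ℂ (Q u) (R x) : ℂ)‖ := by rw [hchain]
      _ ≤ ‖Q u‖ * ‖R x‖ := norm_inner_le_norm _ _
  rw [hterm1, hterm2, Real.sqrt_mul (sq_nonneg _), Real.sqrt_sq (norm_nonneg _),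
    Real.sqrt_sq (norm_nonneg _)]
  calc ‖(inner ℂ (A x) x : ℂ)‖ ≤ ‖Q u‖ * ‖R x‖ := hdec
    _ = ‖R x‖ * ‖Q u‖ := mul_comm _ _
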